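/- Let D, H₀ ∈ ℝ³ with D ≠ 0 and let γ > 0. For each α > 0, the strictly convex function δ ↦ α·‖H₀ + D × δ‖² + γ·‖δ‖² has a unique global minimizer δ_α ∈ ℝ³, and as α → ∞, δ_α converges to δ* = ‖D‖⁻² • (D × H⊥), where H⊥ = H₀ − ‖D‖⁻² • ⟨H₀, D⟩ • D. Consequently ‖H₀ + D × δ_α‖ → |⟨H₀, D⟩|/‖D‖ as α → ∞. -/

import Mathlib

open RealInnerProductSpace Filter

/-- Cross product on `EuclideanSpace ℝ (Fin 3)`. -/
noncomputable def cross3 (a b : EuclideanSpace ℝ (Fin 3)) : EuclideanSpace ℝ (Fin 3) :=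
  (WithLp.equiv 2 (Fin 3 → ℝ)).symm
    ![a 1 * b 2 - a 2 * b 1, a 2 * b 0 - a 0 * b 2, a 0 * b 1 - a 1 * b 0]

private lemma norm_sq3 (x : EuclideanSpace ℝ (Fin 3)) : ‖x‖^2 = x 0^2 + x 1^2 + x 2^2 := by
  rw [← real_inner_self_eq_norm_sq, PiLp.inner_apply]
  simp [Fin.sum_univ_three]

private lemma inner3 (x y : EuclideanSpace ℝ (Fin 3)) :
    ⟪x, y⟫ = x 0 * y 0 + x 1 * y 1 + x 2 * y 2 := by
  rw [PiLp.inner_apply]; simp [Fin.sum_univ_three]; ring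

private lemma cross3_a0 (a b : EuclideanSpace ℝ (Fin 3)) :
    cross3 a b 0 = a 1 * b 2 - a 2 * b 1 := rfl
private lemma cross3_a1 (a b : EuclideanSpace ℝ (Fin 3)) :
    cross3 a b 1 = a 2 * b 0 - a 0 * b 2 := rfl
private lemma cross3_a2 (a b : EuclideanSpace ℝ (Fin 3)) :
    cross3 a b 2 = a 0 * b 1 - a 1 * b 0 := rfl

private lemma cross3_smul (a b : EuclideanSpace ℝ (Fin 3)) (t : ℝ) :
    cross3 a (t • b) = t • cross3 a b := by
  ext i
  fin_cases i <;>
    simp [cross3_a0, cross3_a1, cross3_a2, PiLp.smul_apply, smul_eq_mul] <;> ring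

private lemma cross3_sub_smul (a b c : EuclideanSpace ℝ (Fin 3)) (t : ℝ) :
    cross3 a (b - t • c) = cross3 a b - t • cross3 a c := by
  ext i
  fin_cases i <;>
    simp [cross3_a0, cross3_a1, cross3_a2, PiLp.smul_apply, PiLp.sub_apply, smul_eq_mul] <;> ring

private lemma cross3_self (a : EuclideanSpace ℝ (Fin 3)) : cross3 a a = 0 := by
  ext i
  fin_cases i <;>
    simp [cross3_a0, cross3_a1, cross3_a2] <;> ring

private lemma keyid (α γ c d0 d1 d2 h0 h1 h2 x0 x1 x2 : ℝ)
    (hc : c * (γ + α * (d0^2 + d1^2 + d2^2)) = α) :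
    α * ((h0 + (d1 * (c*(d0*h1-d1*h0)) - d2 * (c*(d2*h0-d0*h2))))^2
       + (h1 + (d2 * (c*(d1*h2-d2*h1)) - d0 * (c*(d0*h1-d1*h0))))^2
       + (h2 + (d0 * (c*(d2*h0-d0*h2)) - d1 * (c*(d1*h2-d2*h1))))^2)
    + γ * ((c*(d1*h2-d2*h1))^2 + (c*(d2*h0-d0*h2))^2 + (c*(d0*h1-d1*h0))^2)
    + (α * ((d1 * (x2 - c*(d0*h1-d1*h0)) - d2 * (x1 - c*(d2*h0-d0*h2)))^2
          + (d2 * (x0 - c*(d1*h2-d2*h1)) - d0 * (x2 - c*(d0*h1-d1*h0)))^2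
          + (d0 * (x1 - c*(d2*h0-d0*h2)) - d1 * (x0 - c*(d1*h2-d2*h1)))^2)
      + γ * ((x0 - c*(d1*h2-d2*h1))^2 + (x1 - c*(d2*h0-d0*h2))^2 + (x2 - c*(d0*h1-d1*h0))^2))
    = α * ((h0 + (d1*x2 - d2*x1))^2 + (h1 + (d2*x0 - d0*x2))^2 + (h2 + (d0*x1 - d1*x0))^2)
      + γ * (x0^2 + x1^2 + x2^2) := by
  linear_combination
    (-2 * ((x0 - c*(d1*h2-d2*h1)) * (d1*h2-d2*h1) + (x1 - c*(d2*h0-d0*h2)) * (d2*h0-d0*h2)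
      + (x2 - c*(d0*h1-d1*h0)) * (d0*h1-d1*h0))) * hc

theorem stmt15 (D H₀ : EuclideanSpace ℝ (Fin 3)) (hD : D ≠ 0) (γ : ℝ) (hγ : 0 < γ)
    (Hperp δstar : EuclideanSpace ℝ (Fin 3))
    (hHperp : Hperp = H₀ - (‖D‖ ^ 2)⁻¹ • ⟪H₀, D⟫ • D)
    (hδstar : δstar = (‖D‖ ^ 2)⁻¹ • cross3 D Hperp) :
    ∃ δmin : ℝ → EuclideanSpace ℝ (Fin 3),
      (∀ α : ℝ, 0 < α →
        (∀ δ : EuclideanSpace ℝ (Fin 3),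
            α * ‖H₀ + cross3 D (δmin α)‖ ^ 2 + γ * ‖δmin α‖ ^ 2
              ≤ α * ‖H₀ + cross3 D δ‖ ^ 2 + γ * ‖δ‖ ^ 2) ∧
        ∀ δ' : EuclideanSpace ℝ (Fin 3),
          (∀ δ : EuclideanSpace ℝ (Fin 3),
              α * ‖H₀ + cross3 D δ'‖ ^ 2 + γ * ‖δ'‖ ^ 2
                ≤ α * ‖H₀ + cross3 D δ‖ ^ 2 + γ * ‖δ‖ ^ 2) → δ' = δmin α) ∧
      Tendsto δmin atTop (nhds δstar) ∧
      Tendsto (fun α : ℝ => ‖H₀ + cross3 D (δmin α)‖) atTop (nhds (|⟪H₀, D⟫| / ‖D‖)) := by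
  have hDnorm : 0 < ‖D‖ := norm_pos_iff.mpr hD
  set k : ℝ := ‖D‖ ^ 2 with hk_def
  have hk : 0 < k := by positivity
  have hkc : k = D 0 ^ 2 + D 1 ^ 2 + D 2 ^ 2 := norm_sq3 D
  set w : EuclideanSpace ℝ (Fin 3) := cross3 D H₀ with hw
  refine ⟨fun α => (α / (α * k + γ)) • w, ?_, ?_, ?_⟩
  · -- minimality and uniqueness
    intro α hα
    have hden : 0 < α * k + γ := by positivity
    set c : ℝ := α / (α * k + γ) with hc_def
    have hc : c * (γ + α * k) = α := by
      rw [hc_def, div_mul_eq_mul_div, div_eq_iff hden.ne']; ring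
    have hkey : ∀ δ : EuclideanSpace ℝ (Fin 3),
        α * ‖H₀ + cross3 D (c • w)‖ ^ 2 + γ * ‖c • w‖ ^ 2
          + (α * ‖cross3 D (δ - c • w)‖ ^ 2 + γ * ‖δ - c • w‖ ^ 2)
        = α * ‖H₀ + cross3 D δ‖ ^ 2 + γ * ‖δ‖ ^ 2 := by
      intro δ
      simp only [norm_sq3, PiLp.add_apply, PiLp.sub_apply, PiLp.smul_apply, smul_eq_mul,
        cross3_a0, cross3_a1, cross3_a2, hw]
      exact keyid α γ c (D 0) (D 1) (D 2) (H₀ 0) (H₀ 1) (H₀ 2) (δ 0) (δ 1) (δ 2)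
        (by rw [← hkc]; exact hc)
    constructor
    · intro δ
      have h1 : 0 ≤ α * ‖cross3 D (δ - c • w)‖ ^ 2 + γ * ‖δ - c • w‖ ^ 2 := by positivity
      linarith [hkey δ]
    · intro δ' hδ'
      have h1 := hδ' (c • w)
      have h2 : α * ‖H₀ + cross3 D (c • w)‖ ^ 2 + γ * ‖c • w‖ ^ 2
          ≤ α * ‖H₀ + cross3 D δ'‖ ^ 2 + γ * ‖δ'‖ ^ 2 := by
        have h0 : 0 ≤ α * ‖cross3 D (δ' - c • w)‖ ^ 2 + γ * ‖δ' - c • w‖ ^ 2 := by positivity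
        linarith [hkey δ']
      have h3 : γ * ‖δ' - c • w‖ ^ 2 ≤ 0 := by
        have h0 : 0 ≤ α * ‖cross3 D (δ' - c • w)‖ ^ 2 := by positivity
        linarith [hkey δ']
      have hs : ‖δ' - c • w‖ ^ 2 = 0 :=
        le_antisymm (by nlinarith) (by positivity)
      have h5 : δ' - c • w = 0 := by
        rw [pow_eq_zero_iff two_ne_zero] at hs
        exact norm_eq_zero.mp hs
      have := sub_eq_zero.mp h5
      simpa using this
  · -- convergence of the minimizers
    have hscal : Tendsto (fun α : ℝ => α / (α * k + γ)) atTop (nhds k⁻¹) := by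
      have h1 : Tendsto (fun α : ℝ => k + γ * α⁻¹) atTop (nhds (k + γ * 0)) :=
        tendsto_const_nhds.add (tendsto_inv_atTop_zero.const_mul γ)
      have h2 : Tendsto (fun α : ℝ => (k + γ * α⁻¹)⁻¹) atTop (nhds k⁻¹) := by
        have := h1.inv₀ (by simpa using hk.ne')
        simpa using this
      refine h2.congr' ?_
      filter_upwards [eventually_gt_atTop (0 : ℝ)] with α hα
      have hden : (0:ℝ) < α * k + γ := by positivity
      have hne : k + γ * α⁻¹ ≠ 0 := by positivity
      rw [eq_div_iff hden.ne']
      have hx : α * k + γ = α * (k + γ * α⁻¹) := by field_simp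
      rw [hx, mul_comm α, ← mul_assoc, inv_mul_cancel₀ hne, one_mul]
    have hlim : Tendsto (fun α : ℝ => (α / (α * k + γ)) • w) atTop (nhds (k⁻¹ • w)) :=
      hscal.smul_const w
    have hδstar' : δstar = k⁻¹ • w := by
      rw [hδstar, hHperp, smul_smul, cross3_sub_smul, cross3_self, smul_zero, sub_zero, hw]
    rwa [hδstar']
  · -- convergence of the residual norm
    have hscal : Tendsto (fun α : ℝ => α / (α * k + γ)) atTop (nhds k⁻¹) := by
      have h1 : Tendsto (fun α : ℝ => k + γ * α⁻¹) atTop (nhds (k + γ * 0)) :=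
        tendsto_const_nhds.add (tendsto_inv_atTop_zero.const_mul γ)
      have h2 : Tendsto (fun α : ℝ => (k + γ * α⁻¹)⁻¹) atTop (nhds k⁻¹) := by
        have := h1.inv₀ (by simpa using hk.ne')
        simpa using this
      refine h2.congr' ?_
      filter_upwards [eventually_gt_atTop (0 : ℝ)] with α hα
      have hden : (0:ℝ) < α * k + γ := by positivity
      have hne : k + γ * α⁻¹ ≠ 0 := by positivity
      rw [eq_div_iff hden.ne']
      have hx : α * k + γ = α * (k + γ * α⁻¹) := by field_simp
      rw [hx, mul_comm α, ← mul_assoc, inv_mul_cancel₀ hne, one_mul]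
    set u : EuclideanSpace ℝ (Fin 3) := cross3 D w with hu
    have hrw : ∀ α : ℝ, H₀ + cross3 D ((α / (α * k + γ)) • w)
        = H₀ + (α / (α * k + γ)) • u := by
      intro α; rw [cross3_smul, hu]
    have hlim : Tendsto (fun α : ℝ => ‖H₀ + (α / (α * k + γ)) • u‖) atTop
        (nhds ‖H₀ + k⁻¹ • u‖) :=
      ((tendsto_const_nhds.add (hscal.smul_const u)).norm)
    have hval : ‖H₀ + k⁻¹ • u‖ = |⟪H₀, D⟫| / ‖D‖ := by
      have hkne : (D 0 ^ 2 + D 1 ^ 2 + D 2 ^ 2) ≠ 0 := by rw [← hkc]; exact hk.ne'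
      have comp : ∀ i : Fin 3, (H₀ + k⁻¹ • u) i = ((k⁻¹ * ⟪H₀, D⟫) • D) i := by
        have e : ∀ i : Fin 3, (H₀ + k⁻¹ • u) i = H₀ i + k⁻¹ * u i := fun _ => rfl
        have e' : ∀ i : Fin 3, ((k⁻¹ * ⟪H₀, D⟫) • D) i = (k⁻¹ * ⟪H₀, D⟫) * D i := fun _ => rfl
        intro i
        fin_cases i
        · rw [show ((⟨0, by norm_num⟩ : Fin 3)) = (0 : Fin 3) from rfl, e, e',
            show u 0 = D 1 * (D 0 * H₀ 1 - D 1 * H₀ 0) - D 2 * (D 2 * H₀ 0 - D 0 * H₀ 2) from rfl,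
            inner3, hkc]
          field_simp
          ring
        · rw [show ((⟨1, by norm_num⟩ : Fin 3)) = (1 : Fin 3) from rfl, e, e',
            show u 1 = D 2 * (D 1 * H₀ 2 - D 2 * H₀ 1) - D 0 * (D 0 * H₀ 1 - D 1 * H₀ 0) from rfl,
            inner3, hkc]
          field_simp
          ring
        · rw [show ((⟨2, by norm_num⟩ : Fin 3)) = (2 : Fin 3) from rfl, e, e',
            show u 2 = D 0 * (D 2 * H₀ 0 - D 0 * H₀ 2) - D 1 * (D 1 * H₀ 2 - D 2 * H₀ 1) from rfl,
            inner3, hkc]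
          field_simp
          ring
      have hvec : H₀ + k⁻¹ • u = (k⁻¹ * ⟪H₀, D⟫) • D := by
        ext i; exact comp i
      rw [hvec, norm_smul, Real.norm_eq_abs, abs_mul, abs_of_pos (inv_pos.mpr hk), hk_def]
      have hDne : ‖D‖ ≠ 0 := hDnorm.ne'
      field_simp
    rw [← hval]
    refine hlim.congr ?_
    intro α
    rw [hrw α]
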